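/- Let ω ≥ 0, M₁ > 0, M₂ > 0, H₀ = ω L_z, L₁ = √M₁ L_z, L₂ = √M₂ L_x, and let ρ̄ be any Bell state. Then for every ρ in the state space S, Tr(ρ̄ F₀(ρ)) = 0, Tr(ρ̄ F₁(ρ)) = 0, and Tr(ρ̄ F₂(ρ)) = 0; that is, in the uncontrolled dynamics the drift of t ↦ Tr(ρ_t ρ̄) vanishes identically (Tr(ρ_t ρ̄) is a martingale). -/
import Mathlib


open Matrix ComplexOrder

noncomputable section

/-- Pauli matrices. -/
def σx : Matrix (Fin 2) (Fin 2) ℂ := !![0, 1; 1, 0]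
def σy : Matrix (Fin 2) (Fin 2) ℂ := !![0, -Complex.I; Complex.I, 0]
def σz : Matrix (Fin 2) (Fin 2) ℂ := !![1, 0; 0, -1]
def id2 : Matrix (Fin 2) (Fin 2) ℂ := 1

/-- Kronecker product of two `2 × 2` matrices, indexed by `Fin 4`
(with the identification `(i,k) ↦ 2*i + k`). -/
def kron (A B : Matrix (Fin 2) (Fin 2) ℂ) : Matrix (Fin 4) (Fin 4) ℂ :=
  fun i j => A ⟨i.val / 2, by omega⟩ ⟨j.val / 2, by omega⟩ *
             B ⟨i.val % 2, by omega⟩ ⟨j.val % 2, by omega⟩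

/-- The measurement matrices `L_z = σ_z ⊗ σ_z` and `L_x = σ_x ⊗ σ_x`. -/
def Lz : Matrix (Fin 4) (Fin 4) ℂ := kron σz σz
def Lx : Matrix (Fin 4) (Fin 4) ℂ := kron σx σx

/-- The Bell vectors. -/
def PsiPlus : Fin 4 → ℂ := ![(Real.sqrt 2 : ℂ)⁻¹, 0, 0, (Real.sqrt 2 : ℂ)⁻¹]
def PsiMinus : Fin 4 → ℂ := ![(Real.sqrt 2 : ℂ)⁻¹, 0, 0, -(Real.sqrt 2 : ℂ)⁻¹]
def PhiPlus : Fin 4 → ℂ := ![0, (Real.sqrt 2 : ℂ)⁻¹, (Real.sqrt 2 : ℂ)⁻¹, 0]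
def PhiMinus : Fin 4 → ℂ := ![0, (Real.sqrt 2 : ℂ)⁻¹, -(Real.sqrt 2 : ℂ)⁻¹, 0]

/-- The rank-one projection `ξξ*`. -/
def outer (ξ : Fin 4 → ℂ) : Matrix (Fin 4) (Fin 4) ℂ := Matrix.vecMulVec ξ (star ξ)

/-- The set of the four Bell states. -/
def BellStates : Set (Matrix (Fin 4) (Fin 4) ℂ) :=
  {outer PsiPlus, outer PsiMinus, outer PhiPlus, outer PhiMinus}

/-- The state space `S`. -/
def IsState (ρ : Matrix (Fin 4) (Fin 4) ℂ) : Prop := ρ.PosSemidef ∧ ρ.trace = 1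

def Λ₁ (ρ : Matrix (Fin 4) (Fin 4) ℂ) : ℝ := (ρ 0 0).re + (ρ 3 3).re
def Λ₂ (ρ : Matrix (Fin 4) (Fin 4) ℂ) : ℝ := (ρ 1 1).re + (ρ 2 2).re
def Γ (ρ : Matrix (Fin 4) (Fin 4) ℂ) : ℝ := 2 * (ρ 1 2).re + 2 * (ρ 0 3).re
def Δ (ρ : Matrix (Fin 4) (Fin 4) ℂ) : ℝ := Λ₁ ρ * (ρ 1 2).re - Λ₂ ρ * (ρ 0 3).re

/-- Hamiltonian part of the drift: `F₀(ρ) = -i[H₀, ρ]` (for `u ≡ 0`). -/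
def Fham (H ρ : Matrix (Fin 4) (Fin 4) ℂ) : Matrix (Fin 4) (Fin 4) ℂ :=
  -(Complex.I • (H * ρ - ρ * H))

/-- Dissipative drift: `F_k(ρ) = L_k ρ L_k - (1/2)(L_k² ρ + ρ L_k²)`. -/
def Fdiss (L ρ : Matrix (Fin 4) (Fin 4) ℂ) : Matrix (Fin 4) (Fin 4) ℂ :=
  L * ρ * L - (1 / 2 : ℂ) • (L * L * ρ + ρ * (L * L))

/-- Diffusion map: `G_k(ρ) = L_k ρ + ρ L_k - 2 Tr(L_k ρ) ρ`. -/
def Gdiff (L ρ : Matrix (Fin 4) (Fin 4) ℂ) : Matrix (Fin 4) (Fin 4) ℂ :=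
  L * ρ + ρ * L - (2 * (L * ρ).trace) • ρ

lemma my_mul_vecMulVec (A : Matrix (Fin 4) (Fin 4) ℂ) (u v : Fin 4 → ℂ) :
    A * Matrix.vecMulVec u v = Matrix.vecMulVec (A *ᵥ u) v := by
  ext i j
  simp [Matrix.mul_apply, Matrix.vecMulVec_apply, Matrix.mulVec, dotProduct,
    Finset.sum_mul, mul_assoc]

lemma my_vecMulVec_mul (A : Matrix (Fin 4) (Fin 4) ℂ) (u v : Fin 4 → ℂ) :
    Matrix.vecMulVec u v * A = Matrix.vecMulVec u (v ᵥ* A) := by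
  ext i j
  simp [Matrix.mul_apply, Matrix.vecMulVec_apply, Matrix.vecMul, dotProduct,
    Finset.mul_sum, mul_assoc]

lemma key (L : Matrix (Fin 4) (Fin 4) ℂ) (ξ : Fin 4 → ℂ) (c a : ℂ) (hc : c * c = 1)
    (h1 : L *ᵥ ξ = c • ξ) (h2 : star ξ ᵥ* L = c • star ξ) (hL : L * L = 1)
    (ρ : Matrix (Fin 4) (Fin 4) ℂ) :
    (outer ξ * Fham (a • L) ρ).trace = 0 ∧ (outer ξ * Fdiss (a • L) ρ).trace = 0 := by
  have E1 : L * outer ξ = c • outer ξ := by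
    rw [outer, my_mul_vecMulVec, h1]
    ext i j; simp [Matrix.vecMulVec_apply, mul_assoc]
  have E2 : outer ξ * L = c • outer ξ := by
    rw [outer, my_vecMulVec_mul, h2]
    ext i j; simp [Matrix.vecMulVec_apply]; ring
  have T1 : (outer ξ * (L * ρ)).trace = c * (outer ξ * ρ).trace := by
    rw [← mul_assoc, E2, Matrix.smul_mul, Matrix.trace_smul, smul_eq_mul]
  have T2 : (outer ξ * (ρ * L)).trace = c * (outer ξ * ρ).trace := by
    rw [← mul_assoc, Matrix.trace_mul_cycle, E1, Matrix.smul_mul,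
      Matrix.trace_smul, smul_eq_mul]
  have T3 : (outer ξ * (L * (ρ * L))).trace = (outer ξ * ρ).trace := by
    have h : outer ξ * (L * (ρ * L)) = outer ξ * L * ρ * L := by
      simp only [mul_assoc]
    rw [h, E2, Matrix.smul_mul, Matrix.smul_mul, Matrix.trace_smul, smul_eq_mul,
      Matrix.trace_mul_cycle, E1, Matrix.smul_mul, Matrix.trace_smul,
      smul_eq_mul, ← mul_assoc, hc, one_mul]
  constructor
  · have : outer ξ * Fham (a • L) ρ =
        -(Complex.I * a) • (outer ξ * (L * ρ)) + (Complex.I * a) • (outer ξ * (ρ * L)) := by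
      simp only [Fham, Matrix.smul_mul, Matrix.mul_smul, Matrix.mul_sub, Matrix.mul_add,
        Matrix.mul_neg, mul_assoc, smul_sub, smul_add, smul_smul, neg_smul]
      module
    rw [this, Matrix.trace_add, Matrix.trace_smul, Matrix.trace_smul, T1, T2]
    simp only [smul_eq_mul]; ring
  · have : outer ξ * Fdiss (a • L) ρ =
        (a * a) • (outer ξ * (L * (ρ * L)))
        - ((a * a) / 2) • (outer ξ * (L * (L * ρ))) - ((a * a) / 2) • (outer ξ * (ρ * (L * L))) := by
      simp only [Fdiss, Matrix.smul_mul, Matrix.mul_smul, Matrix.mul_sub, Matrix.mul_add,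
        Matrix.mul_neg, mul_assoc, smul_sub, smul_add, smul_smul, neg_smul]
      module
    have hLL : outer ξ * (L * (L * ρ)) = outer ξ * ρ := by
      rw [← mul_assoc L L, hL, one_mul]
    have hRR : outer ξ * (ρ * (L * L)) = outer ξ * ρ := by
      rw [hL, mul_one]
    rw [this, hLL, hRR]
    simp only [Matrix.trace_sub, Matrix.trace_smul, T3, smul_eq_mul]
    ring


lemma Lz_eq : Lz = !![1,0,0,0; 0,-1,0,0; 0,0,-1,0; 0,0,0,1] := by
  ext i j; fin_cases i <;> fin_cases j <;> norm_num [Lz, kron, σz]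

lemma Lx_eq : Lx = !![0,0,0,1; 0,0,1,0; 0,1,0,0; 1,0,0,0] := by
  ext i j; fin_cases i <;> fin_cases j <;> norm_num [Lx, kron, σx]

lemma Lz_sq : Lz * Lz = 1 := by
  ext i j
  fin_cases i <;> fin_cases j <;>
    simp [Lz_eq, Matrix.mul_apply, Fin.sum_univ_four, Matrix.one_apply, Matrix.vecHead, Matrix.vecTail]

lemma Lx_sq : Lx * Lx = 1 := by
  ext i j
  fin_cases i <;> fin_cases j <;>
    simp [Lx_eq, Matrix.mul_apply, Fin.sum_univ_four, Matrix.one_apply, Matrix.vecHead, Matrix.vecTail]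

/-- with `H₀ = ω L_z`, `L₁ = √M₁ L_z`, `L₂ = √M₂ L_x` and `ρ̄` any Bell
state, `Tr(ρ̄ F₀(ρ)) = Tr(ρ̄ F₁(ρ)) = Tr(ρ̄ F₂(ρ)) = 0` for every state `ρ`
(the drift of `Tr(ρ_t ρ̄)` vanishes identically). -/
theorem drift_of_fidelity_vanishes (ω M₁ M₂ : ℝ) (hω : 0 ≤ ω) (hM₁ : 0 < M₁)
    (hM₂ : 0 < M₂) (ρbar : Matrix (Fin 4) (Fin 4) ℂ) (hbell : ρbar ∈ BellStates)
    (ρ : Matrix (Fin 4) (Fin 4) ℂ) (hρ : IsState ρ) :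
    (ρbar * Fham ((ω : ℂ) • Lz) ρ).trace = 0 ∧
    (ρbar * Fdiss ((Real.sqrt M₁ : ℂ) • Lz) ρ).trace = 0 ∧
    (ρbar * Fdiss ((Real.sqrt M₂ : ℂ) • Lx) ρ).trace = 0 := by
  rcases hbell with h | h | h | h <;> subst h
  · have z1 : Lz *ᵥ PsiPlus = (1:ℂ) • PsiPlus := by
      funext i; fin_cases i <;>
        simp [Lz_eq, Matrix.mulVec, dotProduct, Fin.sum_univ_four, PsiPlus,
          Matrix.vecHead, Matrix.vecTail]
    have z2 : star PsiPlus ᵥ* Lz = (1:ℂ) • star PsiPlus := by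
      funext i; fin_cases i <;>
        simp [Lz_eq, Matrix.vecMul, dotProduct, Fin.sum_univ_four, PsiPlus,
          Matrix.vecHead, Matrix.vecTail]
    have x1 : Lx *ᵥ PsiPlus = (1:ℂ) • PsiPlus := by
      funext i; fin_cases i <;>
        simp [Lx_eq, Matrix.mulVec, dotProduct, Fin.sum_univ_four, PsiPlus,
          Matrix.vecHead, Matrix.vecTail]
    have x2 : star PsiPlus ᵥ* Lx = (1:ℂ) • star PsiPlus := by
      funext i; fin_cases i <;>
        simp [Lx_eq, Matrix.vecMul, dotProduct, Fin.sum_univ_four, PsiPlus,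
          Matrix.vecHead, Matrix.vecTail]
    exact ⟨(key Lz PsiPlus (1) ((ω:ℂ)) (by norm_num) z1 z2 Lz_sq ρ).1,
      (key Lz PsiPlus (1) _ (by norm_num) z1 z2 Lz_sq ρ).2,
      (key Lx PsiPlus (1) _ (by norm_num) x1 x2 Lx_sq ρ).2⟩
  · have z1 : Lz *ᵥ PsiMinus = (1:ℂ) • PsiMinus := by
      funext i; fin_cases i <;>
        simp [Lz_eq, Matrix.mulVec, dotProduct, Fin.sum_univ_four, PsiMinus,
          Matrix.vecHead, Matrix.vecTail]
    have z2 : star PsiMinus ᵥ* Lz = (1:ℂ) • star PsiMinus := by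
      funext i; fin_cases i <;>
        simp [Lz_eq, Matrix.vecMul, dotProduct, Fin.sum_univ_four, PsiMinus,
          Matrix.vecHead, Matrix.vecTail]
    have x1 : Lx *ᵥ PsiMinus = (-1:ℂ) • PsiMinus := by
      funext i; fin_cases i <;>
        simp [Lx_eq, Matrix.mulVec, dotProduct, Fin.sum_univ_four, PsiMinus,
          Matrix.vecHead, Matrix.vecTail]
    have x2 : star PsiMinus ᵥ* Lx = (-1:ℂ) • star PsiMinus := by
      funext i; fin_cases i <;>
        simp [Lx_eq, Matrix.vecMul, dotProduct, Fin.sum_univ_four, PsiMinus,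
          Matrix.vecHead, Matrix.vecTail]
    exact ⟨(key Lz PsiMinus (1) ((ω:ℂ)) (by norm_num) z1 z2 Lz_sq ρ).1,
      (key Lz PsiMinus (1) _ (by norm_num) z1 z2 Lz_sq ρ).2,
      (key Lx PsiMinus (-1) _ (by norm_num) x1 x2 Lx_sq ρ).2⟩
  · have z1 : Lz *ᵥ PhiPlus = (-1:ℂ) • PhiPlus := by
      funext i; fin_cases i <;>
        simp [Lz_eq, Matrix.mulVec, dotProduct, Fin.sum_univ_four, PhiPlus,
          Matrix.vecHead, Matrix.vecTail]
    have z2 : star PhiPlus ᵥ* Lz = (-1:ℂ) • star PhiPlus := by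
      funext i; fin_cases i <;>
        simp [Lz_eq, Matrix.vecMul, dotProduct, Fin.sum_univ_four, PhiPlus,
          Matrix.vecHead, Matrix.vecTail]
    have x1 : Lx *ᵥ PhiPlus = (1:ℂ) • PhiPlus := by
      funext i; fin_cases i <;>
        simp [Lx_eq, Matrix.mulVec, dotProduct, Fin.sum_univ_four, PhiPlus,
          Matrix.vecHead, Matrix.vecTail]
    have x2 : star PhiPlus ᵥ* Lx = (1:ℂ) • star PhiPlus := by
      funext i; fin_cases i <;>
        simp [Lx_eq, Matrix.vecMul, dotProduct, Fin.sum_univ_four, PhiPlus,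
          Matrix.vecHead, Matrix.vecTail]
    exact ⟨(key Lz PhiPlus (-1) ((ω:ℂ)) (by norm_num) z1 z2 Lz_sq ρ).1,
      (key Lz PhiPlus (-1) _ (by norm_num) z1 z2 Lz_sq ρ).2,
      (key Lx PhiPlus (1) _ (by norm_num) x1 x2 Lx_sq ρ).2⟩
  · have z1 : Lz *ᵥ PhiMinus = (-1:ℂ) • PhiMinus := by
      funext i; fin_cases i <;>
        simp [Lz_eq, Matrix.mulVec, dotProduct, Fin.sum_univ_four, PhiMinus,
          Matrix.vecHead, Matrix.vecTail]
    have z2 : star PhiMinus ᵥ* Lz = (-1:ℂ) • star PhiMinus := by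
      funext i; fin_cases i <;>
        simp [Lz_eq, Matrix.vecMul, dotProduct, Fin.sum_univ_four, PhiMinus,
          Matrix.vecHead, Matrix.vecTail]
    have x1 : Lx *ᵥ PhiMinus = (-1:ℂ) • PhiMinus := by
      funext i; fin_cases i <;>
        simp [Lx_eq, Matrix.mulVec, dotProduct, Fin.sum_univ_four, PhiMinus,
          Matrix.vecHead, Matrix.vecTail]
    have x2 : star PhiMinus ᵥ* Lx = (-1:ℂ) • star PhiMinus := by
      funext i; fin_cases i <;>
        simp [Lx_eq, Matrix.vecMul, dotProduct, Fin.sum_univ_four, PhiMinus,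
          Matrix.vecHead, Matrix.vecTail]
    exact ⟨(key Lz PhiMinus (-1) ((ω:ℂ)) (by norm_num) z1 z2 Lz_sq ρ).1,
      (key Lz PhiMinus (-1) _ (by norm_num) z1 z2 Lz_sq ρ).2,
      (key Lx PhiMinus (-1) _ (by norm_num) x1 x2 Lx_sq ρ).2⟩
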